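/- Let ψ ∈ ℂⁿ be a unit vector, ρ := ψψᴴ the associated rank-one projector, C an arbitrary n×n complex matrix, A := (C + Cᴴ)/2 its Hermitian part, B := (C − Cᴴ)/2 its anti-Hermitian part, and m := tr(Aρ) (a real number). Then (C − m·1)ρ + ρ(Cᴴ − m·1) = ⁅⁅A, ρ⁆ + B, ρ⁆; that is, the diffusion term {C − m, ρ}_c of the stochastic master equation equals a commutator with the state. -/

import Mathlib

open Matrix

lemma proj_idem {n : ℕ} (ψ : Fin n → ℂ) (hψ : star ψ ⬝ᵥ ψ = 1) :
    vecMulVec ψ (star ψ) * vecMulVec ψ (star ψ) = vecMulVec ψ (star ψ) := by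
  ext i j
  simp only [mul_apply, vecMulVec_apply, Pi.star_apply]
  have : ∑ k, ψ i * star (ψ k) * (ψ k * star (ψ j))
      = (ψ i * star (ψ j)) * ∑ k, star (ψ k) * ψ k := by
    rw [Finset.mul_sum]; apply Finset.sum_congr rfl; intro k _; ring
  rw [this]
  have h1 : ∑ k, star (ψ k) * ψ k = 1 := hψ
  rw [h1, mul_one]

lemma sandwich {n : ℕ} (ψ : Fin n → ℂ) (M : Matrix (Fin n) (Fin n) ℂ) :
    vecMulVec ψ (star ψ) * M * vecMulVec ψ (star ψ)
      = (M * vecMulVec ψ (star ψ)).trace • vecMulVec ψ (star ψ) := by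
  ext i j
  simp only [mul_apply, vecMulVec_apply, Pi.star_apply, trace, diag_apply, Matrix.smul_apply,
    smul_eq_mul, Finset.sum_mul, Finset.mul_sum]
  rw [Finset.sum_comm]
  apply Finset.sum_congr rfl; intro k _
  apply Finset.sum_congr rfl; intro l _
  ring

/-- For a pure state `ρ = ψψᴴ` with `ψ` a unit vector, an arbitrary jump
operator `C` with Hermitian part `A = (C + Cᴴ)/2` and anti-Hermitian part
`B = (C − Cᴴ)/2`, and `m = tr(Aρ)`, the diffusion term of the stochastic
master equation is a commutator with the state:
`(C − m·1)ρ + ρ(Cᴴ − m·1) = ⁅⁅A, ρ⁆ + B, ρ⁆`. -/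
theorem diffusion_term_as_commutator
    (n : ℕ) (ψ : Fin n → ℂ) (hψ : star ψ ⬝ᵥ ψ = 1)
    (C : Matrix (Fin n) (Fin n) ℂ) :
    let ρ : Matrix (Fin n) (Fin n) ℂ := vecMulVec ψ (star ψ)
    let A : Matrix (Fin n) (Fin n) ℂ := ((1 : ℂ) / 2) • (C + Cᴴ)
    let B : Matrix (Fin n) (Fin n) ℂ := ((1 : ℂ) / 2) • (C - Cᴴ)
    let m : ℂ := (A * ρ).trace
    (C - m • (1 : Matrix (Fin n) (Fin n) ℂ)) * ρ
        + ρ * (Cᴴ - m • (1 : Matrix (Fin n) (Fin n) ℂ))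
      = ⁅⁅A, ρ⁆ + B, ρ⁆ := by
  intro ρ A B m
  have hρ : ρ * ρ = ρ := proj_idem ψ hψ
  have key : ρ * A * ρ = m • ρ := by
    rw [sandwich ψ A]
  have hC : C = A + B := by
    show C = ((1:ℂ)/2) • (C + Cᴴ) + ((1:ℂ)/2) • (C - Cᴴ)
    module
  have hCH : Cᴴ = A - B := by
    show Cᴴ = ((1:ℂ)/2) • (C + Cᴴ) - ((1:ℂ)/2) • (C - Cᴴ)
    module
  rw [hCH, hC]
  simp only [Ring.lie_def, sub_mul, add_mul, mul_sub, mul_add, smul_mul_assoc, one_mul,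
    mul_smul_comm, mul_one]
  rw [Matrix.mul_assoc A ρ ρ, hρ, key, ← Matrix.mul_assoc ρ A ρ, key,
    ← Matrix.mul_assoc ρ ρ A, hρ]
  abel
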